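/- Let R be a ring and p ∈ R a full idempotent. Then for any left R-module P, P is finitely generated and projective over R if and only if pP is finitely generated and projective over the corner ring pRp. -/

import Mathlib

variable {R : Type*} [Ring R]

/-- The corner `pRp` of a ring `R` at an idempotent `p`, realized as the set of
elements `x` with `p * x * p = x`. -/
def Corner (p : R) : Type _ := {x : R // p * x * p = x}

namespace Corner

variable {p : R}

instance : Zero (Corner p) := ⟨⟨0, by simp⟩⟩
instance : Add (Corner p) :=
  ⟨fun x y => ⟨x.1 + y.1, by rw [mul_add, add_mul, x.2, y.2]⟩⟩
instance : Neg (Corner p) := ⟨fun x => ⟨-x.1, by rw [mul_neg, neg_mul, x.2]⟩⟩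

instance : AddCommGroup (Corner p) where
  add_assoc a b c := Subtype.ext (add_assoc _ _ _)
  zero_add a := Subtype.ext (zero_add _)
  add_zero a := Subtype.ext (add_zero _)
  add_comm a b := Subtype.ext (add_comm _ _)
  neg_add_cancel a := Subtype.ext (neg_add_cancel _)
  nsmul := nsmulRec
  zsmul := zsmulRec

/-- Multiplication in the corner ring (inherited from `R`). -/
def mul (hp : IsIdempotentElem p) (x y : Corner p) : Corner p :=
  ⟨x.1 * y.1, by
    have hx := x.2; have hy := y.2
    conv_lhs => rw [← hx, ← hy]
    conv_rhs => rw [← hx, ← hy]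
    simp only [mul_assoc, hp.eq]
    rw [← mul_assoc p p, hp.eq]⟩

/-- The corner ring `pRp` of a ring at an idempotent `p`: the unit is `p` itself. -/
def ring (hp : IsIdempotentElem p) : Ring (Corner p) where
  __ := (inferInstance : AddCommGroup (Corner p))
  mul := mul hp
  one := ⟨p, by rw [hp.eq, hp.eq]⟩
  mul_assoc a b c := Subtype.ext (mul_assoc a.1 b.1 c.1)
  one_mul a := Subtype.ext (by
    show p * a.1 = a.1
    conv_lhs => rw [← a.2]
    rw [← mul_assoc, ← mul_assoc, hp.eq]
    exact a.2)
  mul_one a := Subtype.ext (by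
    show a.1 * p = a.1
    conv_lhs => rw [← a.2]
    rw [mul_assoc, hp.eq]
    exact a.2)
  left_distrib a b c := Subtype.ext (mul_add a.1 b.1 c.1)
  right_distrib a b c := Subtype.ext (add_mul a.1 b.1 c.1)
  zero_mul a := Subtype.ext (zero_mul a.1)
  mul_zero a := Subtype.ext (mul_zero a.1)

end Corner

section Module

variable {P : Type*} [AddCommGroup P] [Module R P] {p : R}

/-- The subgroup `pP` of a left `R`-module `P`, for an idempotent `p`. -/
def cornerModule (p : R) (P : Type*) [AddCommGroup P] [Module R P] : Type _ :=
  {x : P // p • x = x}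

instance : Zero (cornerModule p P) := ⟨⟨0, by simp⟩⟩
instance : Add (cornerModule p P) :=
  ⟨fun x y => ⟨x.1 + y.1, by rw [smul_add, x.2, y.2]⟩⟩
instance : Neg (cornerModule p P) := ⟨fun x => ⟨-x.1, by rw [smul_neg, x.2]⟩⟩

instance : AddCommGroup (cornerModule p P) where
  add_assoc a b c := Subtype.ext (add_assoc _ _ _)
  zero_add a := Subtype.ext (zero_add _)
  add_zero a := Subtype.ext (add_zero _)
  add_comm a b := Subtype.ext (add_comm _ _)
  neg_add_cancel a := Subtype.ext (neg_add_cancel _)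
  nsmul := nsmulRec
  zsmul := zsmulRec

/-- The `pRp`-module structure on `pP`. -/
def cornerModuleModule (hp : IsIdempotentElem p) :
    letI := Corner.ring hp
    Module (Corner p) (cornerModule p P) :=
  letI := Corner.ring hp
  { smul := fun a x => ⟨a.1 • x.1, by
      calc p • (a.1 • x.1) = (p * a.1) • x.1 := (mul_smul _ _ _).symm
        _ = (p * a.1) • (p • x.1) := by rw [x.2]
        _ = (p * a.1 * p) • x.1 := (mul_smul _ _ _).symm
        _ = a.1 • x.1 := by rw [a.2]⟩
    one_smul := fun x => Subtype.ext x.2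
    mul_smul := fun a b x => Subtype.ext (mul_smul a.1 b.1 x.1)
    smul_zero := fun a => Subtype.ext (by show a.1 • (0 : P) = 0; simp)
    smul_add := fun a x y => Subtype.ext (smul_add a.1 x.1 y.1)
    add_smul := fun a b x => Subtype.ext (add_smul a.1 b.1 x.1)
    zero_smul := fun x => Subtype.ext (by show (0 : R) • x.1 = 0; simp) }

end Module



open Finset in
theorem my_fgproj_of_dualBasis (A : Type*) [Ring A] (M : Type*) [AddCommGroup M] [Module A M]
    {ι : Type*} [Fintype ι] (x : ι → M) (f : ι → (M →ₗ[A] A))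
    (hf : ∀ v : M, ∑ i, f i v • x i = v) :
    Module.Finite A M ∧ Module.Projective A M := by
  classical
  set π : (ι → A) →ₗ[A] M := Fintype.linearCombination A x with hπ
  set s : M →ₗ[A] (ι → A) := LinearMap.pi (fun i => f i) with hs
  have hc : π.comp s = LinearMap.id := by
    ext v
    simpa [π, s, Fintype.linearCombination_apply] using hf v
  have hsurj : Function.Surjective π := fun v => ⟨s v, LinearMap.congr_fun hc v⟩
  exact ⟨Module.Finite.of_surjective π hsurj, Module.Projective.of_split s π hc⟩

open Finset in
theorem my_exists_dualBasis (A : Type*) [Ring A] (M : Type*) [AddCommGroup M] [Module A M]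
    (hF : Module.Finite A M) (hP : Module.Projective A M) :
    ∃ (n : ℕ) (x : Fin n → M) (f : Fin n → (M →ₗ[A] A)),
      ∀ v : M, ∑ i, f i v • x i = v := by
  classical
  obtain ⟨n, x, hx⟩ := Module.Finite.exists_fin (R := A) (M := M)
  set π : (Fin n → A) →ₗ[A] M := Fintype.linearCombination A x with hπ
  have hsurj : Function.Surjective π := by
    rw [← LinearMap.range_eq_top, hπ, Fintype.range_linearCombination, hx]
  obtain ⟨s, hs⟩ := Module.projective_lifting_property π LinearMap.id hsurj
  refine ⟨n, x, fun i => (LinearMap.proj i).comp s, fun v => ?_⟩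
  have := LinearMap.congr_fun hs v
  simpa [π, Fintype.linearCombination_apply] using this

theorem my_exists_full_sum {R : Type*} [Ring R] {p : R}
    (hfull : AddSubgroup.closure {x : R | ∃ r r' : R, x = r * p * r'} = ⊤) :
    ∃ (k : ℕ) (a b : Fin k → R), ∑ j, a j * p * b j = 1 := by
  have h1 : (1 : R) ∈ AddSubgroup.closure {x : R | ∃ r r' : R, x = r * p * r'} := by
    rw [hfull]; trivial
  refine AddSubgroup.closure_induction
    (p := fun x _ => ∃ (k : ℕ) (a b : Fin k → R), ∑ j, a j * p * b j = x)
    ?_ ?_ ?_ ?_ h1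
  · rintro x ⟨r, r', rfl⟩
    exact ⟨1, fun _ => r, fun _ => r', by simp⟩
  · exact ⟨0, Fin.elim0, Fin.elim0, by simp⟩
  · rintro x y _ _ ⟨k₁, a₁, b₁, h₁⟩ ⟨k₂, a₂, b₂, h₂⟩
    refine ⟨k₁ + k₂, Fin.append a₁ a₂, Fin.append b₁ b₂, ?_⟩
    rw [Fin.sum_univ_add]
    simp only [Fin.append_left, Fin.append_right, h₁, h₂]
  · rintro x _ ⟨k, a, b, h⟩
    refine ⟨k, fun j => -a j, b, ?_⟩
    simp only [neg_mul]
    rw [Finset.sum_neg_distrib, h]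

/-- Let `R` be a ring and `p ∈ R` a full idempotent (the additive group
generated by `{r * p * r'}` is all of `R`).  Then a left `R`-module `P` is finitely
generated projective over `R` if and only if `pP` is finitely generated projective over
the corner ring `pRp`. -/
theorem stmt_6 {R : Type*} [Ring R] {p : R} (hp : IsIdempotentElem p)
    (hfull : AddSubgroup.closure {x : R | ∃ r r' : R, x = r * p * r'} = ⊤)
    (P : Type*) [AddCommGroup P] [Module R P] :
    letI := Corner.ring hp
    letI := cornerModuleModule (P := P) hp
    ((Module.Finite R P ∧ Module.Projective R P) ↔
      (Module.Finite (Corner p) (cornerModule p P) ∧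
        Module.Projective (Corner p) (cornerModule p P))) := by

  letI := Corner.ring hp
  letI := cornerModuleModule (P := P) hp
  obtain ⟨k, a, b, hab⟩ := my_exists_full_sum hfull
  have hpp : ∀ t : R, p * (p * t) = p * t := fun t => by rw [← mul_assoc, hp.eq]
  have hmem : ∀ s : R, p * (p * s * p) * p = p * s * p := fun s => by
    simp only [mul_assoc, hp.eq, hpp]
  have hpv : ∀ q : Corner p, p * q.1 = q.1 := fun q => by
    rw [← q.2]; simp only [← mul_assoc, hp.eq]
  have hvp : ∀ q : Corner p, q.1 * p = q.1 := fun q => by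
    rw [← q.2]; simp only [mul_assoc, hp.eq]
  have hpq : ∀ (q : Corner p) (t : R), p * (q.1 * t) = q.1 * t := fun q t => by
    rw [← mul_assoc, hpv q]
  have hqp : ∀ (q : Corner p) (t : R), q.1 * (p * t) = q.1 * t := fun q t => by
    rw [← mul_assoc, hvp q]
  letI : AddCommGroup {x : P // p • x = x} := inferInstanceAs (AddCommGroup (cornerModule p P))
  letI : AddCommGroup {x : R // p * x * p = x} := inferInstanceAs (AddCommGroup (Corner p))
  have hsum_val : ∀ {ι : Type} (s : Finset ι) (g : ι → cornerModule p P),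
      (∑ i ∈ s, g i).1 = ∑ i ∈ s, (g i).1 := fun s g =>
    map_sum (AddMonoidHom.mk' Subtype.val (fun _ _ => rfl)) g s
  have hsum_valR : ∀ {ι : Type} (s : Finset ι) (g : ι → Corner p),
      (∑ i ∈ s, g i).1 = ∑ i ∈ s, (g i).1 := fun s g =>
    map_sum (AddMonoidHom.mk' Subtype.val (fun _ _ => rfl)) g s
  have hYmem : ∀ (c : R) (v : P), p • ((p * c) • v) = (p * c) • v := fun c v => by
    rw [← mul_smul, hpp]
  constructor
  · rintro ⟨hF, hPr⟩
    obtain ⟨n, x, f, hf⟩ := my_exists_dualBasis R P hF hPr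
    let Y : Fin n × Fin k → cornerModule p P := fun q => ⟨(p * b q.2) • x q.1, hYmem _ _⟩
    let G : Fin n × Fin k → (cornerModule p P →ₗ[Corner p] Corner p) := fun q =>
      { toFun := fun m => ⟨p * (f q.1 m.1 * a q.2) * p, hmem _⟩
        map_add' := fun m m' => Subtype.ext (by
          show p * (f q.1 (m.1 + m'.1) * a q.2) * p
              = p * (f q.1 m.1 * a q.2) * p + p * (f q.1 m'.1 * a q.2) * p
          rw [map_add, add_mul, mul_add, add_mul])
        map_smul' := fun c m => Subtype.ext (by
          show p * (f q.1 (c.1 • m.1) * a q.2) * p = c.1 * (p * (f q.1 m.1 * a q.2) * p)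
          rw [map_smul, smul_eq_mul]
          simp only [mul_assoc, hpq c, hqp c]) }
    refine (my_fgproj_of_dualBasis (Corner p) (cornerModule p P) Y G ?_).imp id id
    intro m
    apply Subtype.ext
    rw [hsum_val]
    show ∑ q : Fin n × Fin k, (p * (f q.1 m.1 * a q.2) * p) • ((p * b q.2) • x q.1) = m.1
    have step1 : ∀ q : Fin n × Fin k,
        (p * (f q.1 m.1 * a q.2) * p) • ((p * b q.2) • x q.1)
          = (p * (f q.1 m.1 * (a q.2 * p * b q.2))) • x q.1 := fun q => by
      rw [← mul_smul]; congr 1; simp only [mul_assoc, hpp]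
    simp only [step1]
    rw [Fintype.sum_prod_type]
    have step2 : ∀ i, ∑ j, (p * (f i m.1 * (a j * p * b j))) • x i
        = (p * f i m.1) • x i := fun i => by
      rw [← Finset.sum_smul]; congr 1
      rw [← Finset.mul_sum, ← Finset.mul_sum, hab, mul_one]
    simp only [step2]
    calc ∑ i, (p * f i m.1) • x i = p • ∑ i, f i m.1 • x i := by
          rw [Finset.smul_sum]; simp only [mul_smul]
      _ = m.1 := by rw [hf, m.2]
  · rintro ⟨hF, hPr⟩
    obtain ⟨s, y, g, hg⟩ := my_exists_dualBasis (Corner p) (cornerModule p P) hF hPr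
    let e : R → P → cornerModule p P := fun c v => ⟨(p * c) • v, hYmem _ _⟩
    let qc : R → Corner p := fun c => ⟨p * c * p, hmem c⟩
    have hqc : ∀ c, (qc c).1 = p * c * p := fun _ => rfl
    have hvmul : ∀ u u' : Corner p, (u * u').1 = u.1 * u'.1 := fun _ _ => rfl
    have keylem : ∀ (c : R) (v : P), e c v = ∑ i : Fin k, qc (c * a i) • e (b i) v := by
      intro c v
      apply Subtype.ext
      rw [hsum_val]
      show (p * c) • v = ∑ i : Fin k, (p * (c * a i) * p) • ((p * b i) • v)
      have h1 : ∀ i : Fin k, (p * (c * a i) * p) • ((p * b i) • v)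
          = (p * (c * (a i * p * b i))) • v := fun i => by
        rw [← mul_smul]; congr 1; simp only [mul_assoc, hpp]
      simp only [h1]
      rw [← Finset.sum_smul, ← Finset.mul_sum, ← Finset.mul_sum, hab, mul_one]
    have havg : ∀ X : R, ∑ j, a j * (p * (b j * X)) = X := fun X => by
      simp only [← mul_assoc]
      rw [← Finset.sum_mul, hab, one_mul]
    let F : Fin s → (P →ₗ[R] R) := fun t =>
      { toFun := fun v => ∑ j, a j * p * (g t (e (b j) v)).1
        map_add' := fun v w => by
          have he : ∀ c : R, e c (v + w) = e c v + e c w := fun c =>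
            Subtype.ext (smul_add _ _ _)
          simp only [he, map_add]
          have hvadd : ∀ u u' : Corner p, (u + u').1 = u.1 + u'.1 := fun _ _ => rfl
          rw [← Finset.sum_add_distrib]
          refine Finset.sum_congr rfl fun j _ => ?_
          have hm := congrArg (fun u : Corner p => a j * p * u.1) ((g t).map_add (e (b j) v) (e (b j) w))
          exact hm.trans (mul_add _ _ _)
        map_smul' := fun r v => by
          show ∑ j, a j * p * (g t (e (b j) (r • v))).1
              = r * ∑ j, a j * p * (g t (e (b j) v)).1
          have he : ∀ j, e (b j) (r • v) = e (b j * r) v := fun j =>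
            Subtype.ext (by
              show (p * b j) • r • v = (p * (b j * r)) • v
              rw [← mul_smul, mul_assoc])
          simp only [he]
          simp only [show ∀ j, e (b j * r) v = ∑ i, qc (b j * r * a i) • e (b i) v from
            fun j => keylem _ _]
          simp only [map_sum, map_smul, smul_eq_mul, hsum_valR, hvmul, hqc]
          simp only [Finset.mul_sum]
          rw [Finset.sum_comm]
          refine Finset.sum_congr rfl fun i _ => ?_
          simp only [mul_assoc, hpp]
          rw [havg] }
    refine (my_fgproj_of_dualBasis R P (fun t => (y t).1) F ?_).imp id id
    intro v
    show ∑ t, (∑ j, a j * p * (g t (e (b j) v)).1) • (y t).1 = v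
    have h1 : ∀ t, (∑ j, a j * p * (g t (e (b j) v)).1) • (y t).1
        = ∑ j, (a j * p) • ((g t (e (b j) v)).1 • (y t).1) := fun t => by
      rw [Finset.sum_smul]; simp only [mul_smul]
    simp only [h1]
    rw [Finset.sum_comm]
    have h2 : ∀ j, ∑ t, (a j * p) • ((g t (e (b j) v)).1 • (y t).1)
        = (a j * p) • ((p * b j) • v) := fun j => by
      rw [← Finset.smul_sum]
      congr 1
      have hh := congrArg Subtype.val (hg (e (b j) v))
      rw [hsum_val] at hh
      exact hh
    simp only [h2]
    simp only [← mul_smul]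
    have h3 : ∀ j, a j * p * (p * b j) = a j * p * b j := fun j => by
      simp only [mul_assoc, hpp]
    simp only [h3]
    rw [← Finset.sum_smul, hab, one_smul]
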